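/- Let n ≥ 1, r > 0, and let P be a real n×n matrix such that Id − (r²/2)·P is invertible. Define g(s) := Id − s²·P + (s⁴/4)·P², I_r := r^{-2}·g(r), II_r := (1/(2r))·g′(r) − r^{-2}·g(r), and W := I_r^{-1}·II_r. Then Id − W is invertible and (Id − W)·(Id − (r²/2)·P) = 2·Id; equivalently, Id − (r²/2)·P = 2·(Id − W)^{-1}. -/

import Mathlib

attribute [local instance] Matrix.normedAddCommGroup Matrix.normedSpace

/-- Matrix form of Theorem 1.1: with `g(s) = Id - s²P + (s⁴/4)P²`,
`I_r = r⁻²g(r)`, `II_r = (1/(2r))g′(r) - r⁻²g(r)` and `W = I_r⁻¹ II_r`, if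
`Id - (r²/2)P` is invertible then `Id - W` is invertible and
`(Id - W)(Id - (r²/2)P) = 2·Id`, i.e. `Id - (r²/2)P = 2(Id - W)⁻¹`. -/
theorem stmt_3 (n : ℕ) (hn : 1 ≤ n) (r : ℝ) (hr : 0 < r)
    (P : Matrix (Fin n) (Fin n) ℝ)
    (h : IsUnit (1 - (r ^ 2 / 2) • P))
    (g : ℝ → Matrix (Fin n) (Fin n) ℝ)
    (hg : ∀ s : ℝ, g s = 1 - s ^ 2 • P + (s ^ 4 / 4) • P ^ 2)
    (Ir IIr W : Matrix (Fin n) (Fin n) ℝ)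
    (hIr : Ir = (r ^ 2)⁻¹ • g r)
    (hIIr : IIr = (1 / (2 * r)) • deriv g r - (r ^ 2)⁻¹ • g r)
    (hW : W = Ir⁻¹ * IIr) :
    IsUnit (1 - W) ∧
    (1 - W) * (1 - (r ^ 2 / 2) • P) = 2 • (1 : Matrix (Fin n) (Fin n) ℝ) ∧
    1 - (r ^ 2 / 2) • P = 2 • (1 - W)⁻¹ := by
  have hr0 : r ≠ 0 := ne_of_gt hr
  set A : Matrix (Fin n) (Fin n) ℝ := 1 - (r ^ 2 / 2) • P with hA
  -- derivative of g at r
  have hgf : g = fun s : ℝ => 1 - s ^ 2 • P + (s ^ 4 / 4) • P ^ 2 := funext hg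
  have hderiv : deriv g r = r ^ 3 • P ^ 2 - (2 * r) • P := by
    have h2 : HasDerivAt (fun s : ℝ => s ^ 2) (2 * r) r := by
      simpa using hasDerivAt_pow 2 r
    have h4 : HasDerivAt (fun s : ℝ => s ^ 4 / 4) (r ^ 3) r := by
      have := (hasDerivAt_pow 4 r).div_const 4
      refine this.congr_deriv ?_
      push_cast
      norm_num
    have hP : HasDerivAt (fun s : ℝ => s ^ 2 • P) ((2 * r) • P) r := h2.smul_const P
    have hP2 : HasDerivAt (fun s : ℝ => (s ^ 4 / 4) • P ^ 2) (r ^ 3 • P ^ 2) r :=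
      h4.smul_const (P ^ 2)
    have hgd : HasDerivAt g ((0 - (2 * r) • P) + r ^ 3 • P ^ 2) r := by
      rw [hgf]
      exact (((hasDerivAt_const r (1 : Matrix (Fin n) (Fin n) ℝ)).sub hP).add hP2)
    exact hgd.deriv.trans (by abel)
  -- Ir in terms of A
  have hIrA : Ir = (r ^ 2)⁻¹ • (A * A) := by
    rw [hIr, hg, hA]
    simp only [pow_two, Matrix.mul_sub, Matrix.sub_mul, Matrix.mul_one, Matrix.one_mul,
      Matrix.smul_mul, Matrix.mul_smul, smul_smul]
    match_scalars <;> ring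
  have hAdet : IsUnit A.det := (Matrix.isUnit_iff_isUnit_det A).mp h
  have hIrdet : IsUnit Ir.det := by
    rw [hIrA, Matrix.det_smul, Matrix.det_mul]
    exact (IsUnit.pow _ (isUnit_iff_ne_zero.mpr
      (inv_ne_zero (pow_ne_zero 2 hr0)))).mul (hAdet.mul hAdet)
  have hIrUnit : IsUnit Ir := (Matrix.isUnit_iff_isUnit_det Ir).mpr hIrdet
  -- key computation
  have hkey : (Ir - IIr) * A = Ir * (2 • (1 : Matrix (Fin n) (Fin n) ℝ)) := by
    rw [hIr, hIIr, hderiv, hg, hA]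
    simp only [pow_two, Matrix.mul_sub, Matrix.sub_mul, Matrix.mul_add, Matrix.add_mul,
      Matrix.mul_one, Matrix.one_mul, Matrix.smul_mul, Matrix.mul_smul, smul_smul,
      smul_sub, smul_add, sub_mul, mul_one, one_mul]
    match_scalars <;> field_simp <;> ring
  have hstep : Ir * (1 - W) = Ir - IIr := by
    rw [hW, Matrix.mul_sub, Matrix.mul_one, Matrix.mul_nonsing_inv_cancel_left _ _ hIrdet]
  have hcancel : Ir * ((1 - W) * A) = Ir * (2 • (1 : Matrix (Fin n) (Fin n) ℝ)) := by
    rw [← Matrix.mul_assoc, hstep, hkey]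
  have hmain : (1 - W) * A = 2 • (1 : Matrix (Fin n) (Fin n) ℝ) :=
    hIrUnit.mul_left_cancel hcancel
  have h21 : ∀ M : Matrix (Fin n) (Fin n) ℝ, (2 : ℕ) • M = (2 : ℝ) • M := fun M => by
    rw [two_nsmul, two_smul]
  have hWdet : IsUnit (1 - W).det := by
    have hu : IsUnit ((1 - W).det * A.det) := by
      rw [← Matrix.det_mul, hmain, h21 1, Matrix.det_smul, Matrix.det_one, mul_one]
      exact IsUnit.pow _ (isUnit_iff_ne_zero.mpr (by norm_num))
    exact isUnit_of_mul_isUnit_left hu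
  refine ⟨(Matrix.isUnit_iff_isUnit_det _).mpr hWdet, hmain, ?_⟩
  have h3 : (1 - W)⁻¹ * ((1 - W) * A) = (1 - W)⁻¹ * (2 • (1 : Matrix (Fin n) (Fin n) ℝ)) := by
    rw [hmain]
  rw [Matrix.nonsing_inv_mul_cancel_left _ _ hWdet, h21 1, Matrix.mul_smul, Matrix.mul_one] at h3
  rw [h3, h21]
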